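/- Under the Ewens–Pitman weight system, for every integer x with 0 ≤ x ≤ min(j, m), the conditional probability that exactly x old blocks are re-observed satisfies P[R = x | π] = (1/(θ+n)_{m↑})·(−1)^j·Σ_{v=j−x}^{j} binom(v, j−x)·(−1)^{v+x}·Σ_{{c_1,…,c_v}∈C_{j,v}} (θ + n − Σ_{i=1}^{v} n_{c_i} + σv)_{m↑}; moreover this probability is strictly positive. -/

import Mathlib

open Finset

attribute [local instance] Classical.propDecidable

noncomputable section

/-- Rising factorial `x(x+1)⋯(x+N−1)`. -/
def risingFac (x : ℝ) (N : ℕ) : ℝ := ∏ i ∈ Finset.range N, (x + i)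

/-- Falling factorial `x(x−1)⋯(x−N+1)`. -/
def fallingFac (x : ℝ) (N : ℕ) : ℝ := ∏ i ∈ Finset.range N, (x - i)

/-- Noncentral generalized factorial coefficient `C(N,k;σ,γ)`. -/
def gfc (N k : ℕ) (σ γ : ℝ) : ℝ :=
  (1 / (Nat.factorial k : ℝ)) *
    ∑ i ∈ Finset.range (k + 1),
      (-1 : ℝ) ^ i * (Nat.choose k i : ℝ) * risingFac (-(i : ℝ) * σ - γ) N

/-- Central generalized factorial coefficient `C(N,k;σ)`. -/
def cgfc (N k : ℕ) (σ : ℝ) : ℝ := gfc N k σ 0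

/-- Binomial coefficient over `ℤ`, zero unless `0 ≤ b ≤ a`. -/
def ibinom (a b : ℤ) : ℝ :=
  if 0 ≤ b ∧ b ≤ a then (Nat.choose a.toNat b.toNat : ℝ) else 0

/-- Multinomial coefficient `m!/((l!)^r (m−rl)!)`, zero if `rl > m`. -/
def multinom (m l r : ℕ) : ℝ :=
  if r * l ≤ m then
    (Nat.factorial m : ℝ) / ((Nat.factorial l : ℝ) ^ r * (Nat.factorial (m - r * l) : ℝ))
  else 0

/-- `P` is a set partition of the finset `s`. -/
def IsPartOn {α : Type*} (s : Finset α) (P : Finset (Finset α)) : Prop :=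
  (∀ B ∈ P, B ⊆ s) ∧ ∅ ∉ P ∧ ∀ a ∈ s, ∃! B, B ∈ P ∧ a ∈ B

/-- Restriction of a partition to `s`. -/
def restrictPart {α : Type*} [DecidableEq α] (P : Finset (Finset α)) (s : Finset α) :
    Finset (Finset α) := (P.image fun C => C ∩ s).erase ∅

/-- Gibbs probability of a partition with block sizes `|C|` and `VN k` the Gibbs weight. -/
def gibbsW {α : Type*} (σ : ℝ) (VN : ℕ → ℝ) (P : Finset (Finset α)) : ℝ :=
  VN P.card * ∏ C ∈ P, risingFac (1 - σ) (C.card - 1)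

/-- Ewens–Pitman weight system. -/
def EPV (σ θ : ℝ) : ℕ → ℕ → ℝ :=
  fun N k => (∏ i ∈ Finset.range k, (θ + (i : ℝ) * σ)) / risingFac θ N

/-- The "old" elements `{1,…,n}` inside `{1,…,n+m}`. -/
def oldSet (n m : ℕ) : Finset (Fin (n + m)) :=
  Finset.univ.filter fun x => (x : ℕ) < n

/-- Number of new elements in the block of `ρ` containing the old block `Bi`. -/
def Scount (n m : ℕ) (Bi : Finset (Fin (n + m))) (ρ : Finset (Finset (Fin (n + m)))) : ℕ :=
  ∑ C ∈ ρ.filter (fun C => Bi ⊆ C), (C \ oldSet n m).card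

/-- Partitions of `{1,…,n+m}` extending the partition `πP` of the old elements. -/
def extensions (n m : ℕ) (πP : Finset (Finset (Fin (n + m)))) :
    Finset (Finset (Finset (Fin (n + m)))) :=
  Finset.univ.filter fun ρ => IsPartOn Finset.univ ρ ∧ restrictPart ρ (oldSet n m) = πP

/-- Conditional expectation given complete information (the initial partition `πP`). -/
def condExpPi (σ : ℝ) (V : ℕ → ℕ → ℝ) (n m : ℕ) (πP : Finset (Finset (Fin (n + m))))
    (f : Finset (Finset (Fin (n + m))) → ℝ) : ℝ :=
  (∑ ρ ∈ extensions n m πP, f ρ * gibbsW σ (V (n + m)) ρ) /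
    (∑ ρ ∈ extensions n m πP, gibbsW σ (V (n + m)) ρ)

/-- Partitions of `{1,…,n+m}` whose restriction to the old elements has exactly `j` blocks. -/
def withJ (n m j : ℕ) : Finset (Finset (Finset (Fin (n + m)))) :=
  Finset.univ.filter fun ρ =>
    IsPartOn Finset.univ ρ ∧ (restrictPart ρ (oldSet n m)).card = j

/-- Partitions of `s` with exactly `j` blocks. -/
def partsJOf {α : Type*} [Fintype α] (s : Finset α) (j : ℕ) :
    Finset (Finset (Finset α)) :=
  Finset.univ.filter fun π' => IsPartOn s π' ∧ π'.card = j

/-- Conditional expectation given the incomplete information `K_n = j`. -/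
def condExpK (σ : ℝ) (V : ℕ → ℕ → ℝ) (n m j : ℕ)
    (f : Finset (Finset (Fin (n + m))) → ℝ) : ℝ :=
  (∑ ρ ∈ withJ n m j, f ρ * gibbsW σ (V (n + m)) ρ) /
    (∑ π' ∈ partsJOf (oldSet n m) j, gibbsW σ (V n) π')

/-- Number of old blocks (indexed by `B`) re-observed in the additional sample. -/
def RcntB (n m j : ℕ) (B : Fin j → Finset (Fin (n + m)))
    (ρ : Finset (Finset (Fin (n + m)))) : ℕ :=
  (Finset.univ.filter fun i : Fin j => Scount n m (B i) ρ ≠ 0).card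

/-- Number of old blocks (indexed by `B`) re-observed with frequency `l`. -/
def RlcntB (n m j l : ℕ) (B : Fin j → Finset (Fin (n + m)))
    (ρ : Finset (Finset (Fin (n + m)))) : ℕ :=
  (Finset.univ.filter fun i : Fin j => Scount n m (B i) ρ = l).card

/-- Number of blocks of the restriction whose containing block has a new element. -/
def Rcnt (n m : ℕ) (ρ : Finset (Finset (Fin (n + m)))) : ℕ :=
  ((restrictPart ρ (oldSet n m)).filter fun Bi =>
    ∃ C ∈ ρ, Bi ⊆ C ∧ (C \ oldSet n m) ≠ ∅).card

/-- Number of blocks of the restriction whose containing block has exactly `l` new elements. -/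
def Rlcnt (n m l : ℕ) (ρ : Finset (Finset (Fin (n + m)))) : ℕ :=
  ((restrictPart ρ (oldSet n m)).filter fun Bi =>
    ∃ C ∈ ρ, Bi ⊆ C ∧ (C \ oldSet n m).card = l).card

/-- Number of bijections from `Fin j` onto the blocks of `π'` satisfying `Q`. -/
def bijCount {α : Type*} [Fintype α] (j : ℕ) (π' : Finset (Finset α))
    (Q : (Fin j → Finset α) → Prop) : ℕ :=
  ((Finset.univ : Finset (Fin j → Finset α)).filter fun β =>
    Function.Injective β ∧ Finset.image β Finset.univ = π' ∧ Q β).card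

/-- Conditional expectation given almost-complete information. -/
def condExpTau (σ : ℝ) (V : ℕ → ℕ → ℝ) (n m j p : ℕ) (τ : Fin p → Fin j) (nτ : Fin p → ℕ)
    (f : Finset (Finset (Fin (n + m))) → ℝ) : ℝ :=
  (∑ ρ ∈ withJ n m j,
      (bijCount j (restrictPart ρ (oldSet n m)) (fun β => ∀ i, (β (τ i)).card = nτ i) : ℝ) *
        f ρ * gibbsW σ (V (n + m)) ρ) /
    (∑ π' ∈ partsJOf (oldSet n m) j,
      (bijCount j π' (fun β => ∀ i, (β (τ i)).card = nτ i) : ℝ) * gibbsW σ (V n) π')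

set_option linter.unusedSectionVars false
set_option linter.unusedVariables false

-- risingFac lemmas
lemma risingFac_zero (x : ℝ) : risingFac x 0 = 1 := by simp [risingFac]

lemma risingFac_succ (x : ℝ) (N : ℕ) : risingFac x (N+1) = risingFac x N * (x + N) := by
  simp [risingFac, Finset.prod_range_succ]

lemma risingFac_pos {x : ℝ} (hx : 0 < x) (N : ℕ) : 0 < risingFac x N := by
  apply Finset.prod_pos
  intro i _
  positivity

lemma risingFac_add (x : ℝ) (n m : ℕ) :
    risingFac x (n + m) = risingFac x n * risingFac (x + n) m := by
  rw [risingFac, risingFac, risingFac, Finset.prod_range_add]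
  congr 1
  apply Finset.prod_congr rfl
  intro i _
  push_cast
  ring

lemma risingFac_ne_zero {x : ℝ} (hx : x ≠ 0) (hx1 : -1 < x) (N : ℕ) : risingFac x N ≠ 0 := by
  apply Finset.prod_ne_zero_iff.2
  intro i _
  rcases Nat.eq_zero_or_pos i with h | h
  · simpa [h] using hx
  · have : (1:ℝ) ≤ (i:ℝ) := by exact_mod_cast h
    nlinarith

-- partition lemmas
section Part
variable {α : Type*} [DecidableEq α] {s : Finset α} {P : Finset (Finset α)}

lemma IsPartOn.block_ne (h : IsPartOn s P) {C : Finset α} (hC : C ∈ P) : C ≠ ∅ := by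
  rintro rfl; exact h.2.1 hC

lemma IsPartOn.unique_block (h : IsPartOn s P) {C D : Finset α} (hC : C ∈ P) (hD : D ∈ P)
    {a : α} (haC : a ∈ C) (haD : a ∈ D) : C = D := by
  have ha : a ∈ s := h.1 C hC haC
  obtain ⟨E, _, hEu⟩ := h.2.2 a ha
  rw [hEu C ⟨hC, haC⟩, hEu D ⟨hD, haD⟩]

lemma IsPartOn.disjoint (h : IsPartOn s P) {C D : Finset α} (hC : C ∈ P) (hD : D ∈ P)
    (hne : C ≠ D) : Disjoint C D := by
  rw [Finset.disjoint_left]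
  intro a haC haD
  exact hne (h.unique_block hC hD haC haD)

lemma IsPartOn.biUnion_eq (h : IsPartOn s P) : P.biUnion id = s := by
  apply Finset.ext
  intro a
  simp only [Finset.mem_biUnion, id]
  constructor
  · rintro ⟨C, hC, haC⟩; exact h.1 C hC haC
  · intro ha
    obtain ⟨C, ⟨hC, haC⟩, _⟩ := h.2.2 a ha
    exact ⟨C, hC, haC⟩

lemma IsPartOn.sum_card (h : IsPartOn s P) : ∑ C ∈ P, C.card = s.card := by
  rw [← h.biUnion_eq, Finset.card_biUnion]
  · simp
  intro C hC D hD hne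
  exact h.disjoint hC hD hne

lemma IsPartOn.card_pos (h : IsPartOn s P) (hs : s.Nonempty) : 0 < P.card := by
  obtain ⟨a, ha⟩ := hs
  obtain ⟨C, ⟨hC, _⟩, _⟩ := h.2.2 a ha
  exact Finset.card_pos.2 ⟨C, hC⟩

def blockAt {α : Type*} [DecidableEq α] (P : Finset (Finset α)) (a : α) : Finset α :=
  P.sup (fun C => if a ∈ C then C else ∅)

lemma blockAt_eq (h : IsPartOn s P) {C : Finset α} (hC : C ∈ P) {a : α} (haC : a ∈ C) :
    blockAt P a = C := by
  apply le_antisymm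
  · apply Finset.sup_le
    intro D hD
    by_cases hm : a ∈ D
    · simp only [if_pos hm]
      exact le_of_eq (h.unique_block hD hC hm haC)
    · simp [if_neg hm]
  · have := Finset.le_sup (f := fun D => if a ∈ D then D else ∅) hC
    simpa [haC, blockAt] using this

lemma mem_restrictPart {P : Finset (Finset α)} {s D : Finset α} :
    D ∈ restrictPart P s ↔ D ≠ ∅ ∧ ∃ C ∈ P, C ∩ s = D := by
  simp [restrictPart, Finset.mem_erase, Finset.mem_image, eq_comm]

end Part

-- my definitions
def wW {α : Type*} (σ θ : ℝ) (ρ : Finset (Finset α)) : ℝ :=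
  (∏ i ∈ Finset.range ρ.card, (θ + (i:ℝ) * σ)) * ∏ C ∈ ρ, risingFac (1 - σ) (C.card - 1)

lemma gibbsW_EPV {α : Type*} (σ θ : ℝ) (N : ℕ) (ρ : Finset (Finset α)) :
    gibbsW σ (EPV σ θ N) ρ = wW σ θ ρ / risingFac θ N := by
  simp [gibbsW, EPV, wW, div_mul_eq_mul_div]

def Sset (n m t : ℕ) : Finset (Fin (n + m)) := Finset.univ.filter fun a => (a : ℕ) < n + t

def ExtT (n m j : ℕ) (B : Fin j → Finset (Fin (n + m))) (c : Finset (Fin j)) (t : ℕ) :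
    Finset (Finset (Finset (Fin (n + m)))) :=
  Finset.univ.filter fun ρ => IsPartOn (Sset n m t) ρ ∧
    restrictPart ρ (oldSet n m) = Finset.image B Finset.univ ∧
    ∀ i ∈ c, ∀ C ∈ ρ, B i ⊆ C → C ⊆ oldSet n m

lemma mem_ExtT {n m j : ℕ} {B : Fin j → Finset (Fin (n + m))} {c : Finset (Fin j)} {t : ℕ}
    {ρ : Finset (Finset (Fin (n + m)))} :
    ρ ∈ ExtT n m j B c t ↔ IsPartOn (Sset n m t) ρ ∧
      restrictPart ρ (oldSet n m) = Finset.image B Finset.univ ∧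
      ∀ i ∈ c, ∀ C ∈ ρ, B i ⊆ C → C ⊆ oldSet n m := by
  simp [ExtT]

lemma Sset_zero (n m : ℕ) : Sset n m 0 = oldSet n m := by
  simp [Sset, oldSet]

lemma Sset_last (n m : ℕ) : Sset n m m = Finset.univ := by
  apply Finset.ext; intro a; simp [Sset, a.isLt]

lemma card_Sset (n m t : ℕ) (ht : t ≤ m) : (Sset n m t).card = n + t := by
  rw [Sset]
  rw [Finset.card_filter]
  rw [Fin.sum_univ_eq_sum_range (fun i => if i < n + t then 1 else 0)]
  rw [Finset.sum_boole]
  have : (Finset.range (n+m)).filter (fun i => i < n + t) = Finset.range (n+t) := by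
    apply Finset.ext; intro i; simp [Finset.mem_filter, Finset.mem_range]; omega
  rw [this]
  simp

section InsRem
variable {α : Type*} [DecidableEq α] {s : Finset α} {P : Finset (Finset α)} {e : α}

lemma IsPartOn.not_mem_block (h : IsPartOn s P) (he : e ∉ s) {C : Finset α} (hC : C ∈ P) :
    e ∉ C := fun hmem => he (h.1 C hC hmem)

lemma isPartOn_insert_new (h : IsPartOn s P) (he : e ∉ s) :
    IsPartOn (insert e s) (insert {e} P) := by
  refine ⟨?_, ?_, ?_⟩
  · intro D hD
    rcases Finset.mem_insert.1 hD with rfl | hD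
    · intro x hx; rw [Finset.mem_singleton] at hx; subst hx; exact Finset.mem_insert_self _ _
    · exact (h.1 D hD).trans (Finset.subset_insert _ _)
  · intro hmem
    rcases Finset.mem_insert.1 hmem with h' | h'
    · exact absurd h'.symm (Finset.singleton_ne_empty e)
    · exact h.2.1 h'
  · intro a ha
    rcases Finset.mem_insert.1 ha with rfl | ha'
    · refine ⟨{a}, ⟨Finset.mem_insert_self _ _, Finset.mem_singleton_self a⟩, ?_⟩
      rintro D ⟨hD, haD⟩
      rcases Finset.mem_insert.1 hD with rfl | hD
      · rfl
      · exact absurd (h.1 D hD haD) he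
    · have hane : a ≠ e := fun h' => he (h' ▸ ha')
      obtain ⟨D, ⟨hD, haD⟩, hu⟩ := h.2.2 a ha'
      refine ⟨D, ⟨Finset.mem_insert_of_mem hD, haD⟩, ?_⟩
      rintro D' ⟨hD', haD'⟩
      rcases Finset.mem_insert.1 hD' with rfl | hD'
      · exact absurd (Finset.mem_singleton.1 haD') hane
      · exact hu D' ⟨hD', haD'⟩

lemma isPartOn_insert_into (h : IsPartOn s P) (he : e ∉ s) {C : Finset α} (hC : C ∈ P) :
    IsPartOn (insert e s) (insert (insert e C) (P.erase C)) := by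
  have heC : e ∉ C := h.not_mem_block he hC
  refine ⟨?_, ?_, ?_⟩
  · intro D hD
    rcases Finset.mem_insert.1 hD with rfl | hD
    · exact Finset.insert_subset_insert _ (h.1 C hC)
    · exact (h.1 D (Finset.mem_of_mem_erase hD)).trans (Finset.subset_insert _ _)
  · intro hmem
    rcases Finset.mem_insert.1 hmem with h' | h'
    · exact absurd h'.symm (Finset.insert_ne_empty _ _)
    · exact h.2.1 (Finset.mem_of_mem_erase h')
  · intro a ha
    rcases Finset.mem_insert.1 ha with rfl | ha'
    · refine ⟨insert a C, ⟨Finset.mem_insert_self _ _, Finset.mem_insert_self _ _⟩, ?_⟩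
      rintro D ⟨hD, haD⟩
      rcases Finset.mem_insert.1 hD with rfl | hD
      · rfl
      · exact absurd (h.1 D (Finset.mem_of_mem_erase hD) haD) he
    · have hane : a ≠ e := fun h' => he (h' ▸ ha')
      obtain ⟨D, ⟨hD, haD⟩, hu⟩ := h.2.2 a ha'
      by_cases hDC : D = C
      · subst hDC
        refine ⟨insert e D, ⟨Finset.mem_insert_self _ _, Finset.mem_insert_of_mem haD⟩, ?_⟩
        rintro D' ⟨hD', haD'⟩
        rcases Finset.mem_insert.1 hD' with rfl | hD'
        · rfl
        · exact absurd (hu D' ⟨Finset.mem_of_mem_erase hD', haD'⟩)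
            (Finset.ne_of_mem_erase hD')
      · refine ⟨D, ⟨Finset.mem_insert_of_mem (Finset.mem_erase.2 ⟨hDC, hD⟩), haD⟩, ?_⟩
        rintro D' ⟨hD', haD'⟩
        rcases Finset.mem_insert.1 hD' with rfl | hD'
        · rcases Finset.mem_insert.1 haD' with rfl | haC
          · exact absurd rfl hane
          · exact absurd (hu C ⟨hC, haC⟩).symm hDC
        · exact hu D' ⟨Finset.mem_of_mem_erase hD', haD'⟩

lemma isPartOn_erase_singleton (h : IsPartOn (insert e s) P) (he : e ∉ s)
    (hs : {e} ∈ P) : IsPartOn s (P.erase {e}) := by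
  have key : ∀ D ∈ P, D ≠ {e} → e ∉ D := by
    intro D hD hne hmem
    exact hne (h.unique_block hD hs hmem (Finset.mem_singleton_self e))
  refine ⟨?_, fun h' => h.2.1 (Finset.mem_of_mem_erase h'), ?_⟩
  · intro D hD x hx
    have hDP := Finset.mem_of_mem_erase hD
    have hxe : x ≠ e := fun h' => key D hDP (Finset.ne_of_mem_erase hD) (h' ▸ hx)
    rcases Finset.mem_insert.1 (h.1 D hDP hx) with h' | h'
    · exact absurd h' hxe
    · exact h'
  · intro a ha
    have hane : a ≠ e := fun h' => he (h' ▸ ha)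
    obtain ⟨D, ⟨hD, haD⟩, hu⟩ := h.2.2 a (Finset.mem_insert_of_mem ha)
    have hDne : D ≠ {e} := fun h' => hane (Finset.mem_singleton.1 (h' ▸ haD))
    refine ⟨D, ⟨Finset.mem_erase.2 ⟨hDne, hD⟩, haD⟩, ?_⟩
    rintro D' ⟨hD', haD'⟩
    exact hu D' ⟨Finset.mem_of_mem_erase hD', haD'⟩

lemma isPartOn_erase_from (h : IsPartOn (insert e s) P) (he : e ∉ s)
    {D : Finset α} (hD : D ∈ P) (heD : e ∈ D) (hne : D ≠ {e}) :
    IsPartOn s (insert (D.erase e) (P.erase D)) := by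
  have key : ∀ C ∈ P, C ≠ D → e ∉ C := by
    intro C hC hCD hmem
    exact hCD (h.unique_block hC hD hmem heD)
  have hDe : D.erase e ≠ ∅ := by
    intro h'
    apply hne
    apply Finset.ext
    intro x
    simp only [Finset.mem_singleton]
    constructor
    · intro hx
      by_contra hxe
      exact absurd (Finset.mem_erase.2 ⟨hxe, hx⟩) (by simp [h'])
    · rintro rfl; exact heD
  refine ⟨?_, ?_, ?_⟩
  · intro C hC x hx
    rcases Finset.mem_insert.1 hC with rfl | hC
    · have hxe := Finset.ne_of_mem_erase hx
      rcases Finset.mem_insert.1 (h.1 D hD (Finset.mem_of_mem_erase hx)) with h' | h'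
      · exact absurd h' hxe
      · exact h'
    · have hCP := Finset.mem_of_mem_erase hC
      have hxe : x ≠ e := fun h' => key C hCP (Finset.ne_of_mem_erase hC) (h' ▸ hx)
      rcases Finset.mem_insert.1 (h.1 C hCP hx) with h' | h'
      · exact absurd h' hxe
      · exact h'
  · intro hmem
    rcases Finset.mem_insert.1 hmem with h' | h'
    · exact hDe h'.symm
    · exact h.2.1 (Finset.mem_of_mem_erase h')
  · intro a ha
    have hane : a ≠ e := fun h' => he (h' ▸ ha)
    obtain ⟨C, ⟨hC, haC⟩, hu⟩ := h.2.2 a (Finset.mem_insert_of_mem ha)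
    by_cases hCD : C = D
    · subst hCD
      refine ⟨C.erase e, ⟨Finset.mem_insert_self _ _, Finset.mem_erase.2 ⟨hane, haC⟩⟩, ?_⟩
      rintro D' ⟨hD', haD'⟩
      rcases Finset.mem_insert.1 hD' with rfl | hD'
      · rfl
      · exact absurd (hu D' ⟨Finset.mem_of_mem_erase hD', haD'⟩) (Finset.ne_of_mem_erase hD')
    · refine ⟨C, ⟨Finset.mem_insert_of_mem (Finset.mem_erase.2 ⟨hCD, hC⟩), haC⟩, ?_⟩
      rintro D' ⟨hD', haD'⟩
      rcases Finset.mem_insert.1 hD' with rfl | hD'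
      · exact absurd (hu D ⟨hD, Finset.mem_of_mem_erase haD'⟩).symm hCD
      · exact hu D' ⟨Finset.mem_of_mem_erase hD', haD'⟩

lemma restrictPart_insert_singleton (he : e ∉ s) :
    restrictPart (insert {e} P) s = restrictPart P s := by
  unfold restrictPart
  rw [Finset.image_insert]
  have : ({e} : Finset α) ∩ s = ∅ := by
    apply Finset.ext; intro x; simp only [Finset.mem_inter, Finset.mem_singleton,
      Finset.notMem_empty, iff_false]
    rintro ⟨rfl, hx⟩; exact he hx
  rw [this]
  apply Finset.ext
  intro D
  simp only [Finset.mem_erase, Finset.mem_insert]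
  tauto

lemma restrictPart_update {C D : Finset α} (hC : C ∈ P) (hD : D ∩ s = C ∩ s) :
    restrictPart (insert D (P.erase C)) s = restrictPart P s := by
  unfold restrictPart
  congr 1
  rw [Finset.image_insert, hD]
  conv_rhs => rw [← Finset.insert_erase hC, Finset.image_insert]

end InsRem

section Main
variable {n m j : ℕ} {σ θ : ℝ} {B : Fin j → Finset (Fin (n + m))}

lemma restrictPart_self {α : Type*} [DecidableEq α] {s : Finset α} {P : Finset (Finset α)}
    (h : IsPartOn s P) : restrictPart P s = P := by
  unfold restrictPart
  have : P.image (fun C => C ∩ s) = P := by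
    apply Finset.ext; intro D
    simp only [Finset.mem_image]
    constructor
    · rintro ⟨C, hC, rfl⟩; rwa [Finset.inter_eq_left.2 (h.1 C hC)]
    · intro hD; exact ⟨D, hD, Finset.inter_eq_left.2 (h.1 D hD)⟩
  rw [this, Finset.erase_eq_of_notMem h.2.1]

lemma B_ne (hπ : IsPartOn (oldSet n m) (Finset.image B Finset.univ)) (i : Fin j) :
    B i ≠ ∅ := hπ.block_ne (Finset.mem_image_of_mem B (Finset.mem_univ i))

lemma B_sub (hπ : IsPartOn (oldSet n m) (Finset.image B Finset.univ)) (i : Fin j) :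
    B i ⊆ oldSet n m := hπ.1 _ (Finset.mem_image_of_mem B (Finset.mem_univ i))

lemma B_sub_eq (hπ : IsPartOn (oldSet n m) (Finset.image B Finset.univ))
    (hBinj : Function.Injective B) {i i' : Fin j} (h : B i ⊆ B i') : i = i' := by
  obtain ⟨a, ha⟩ := Finset.nonempty_iff_ne_empty.2 (B_ne hπ i)
  exact hBinj (hπ.unique_block (Finset.mem_image_of_mem B (Finset.mem_univ i))
    (Finset.mem_image_of_mem B (Finset.mem_univ i')) ha (h ha))

lemma old_sub_Sset (t : ℕ) : oldSet n m ⊆ Sset n m t := by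
  intro a; simp only [oldSet, Sset, Finset.mem_filter, Finset.mem_univ, true_and]; omega

lemma e_not_old {e : Fin (n + m)} {t : ℕ} (he : (e : ℕ) = n + t) : e ∉ oldSet n m := by
  simp only [oldSet, Finset.mem_filter, Finset.mem_univ, true_and]; omega

lemma e_not_Sset {e : Fin (n + m)} {t : ℕ} (he : (e : ℕ) = n + t) : e ∉ Sset n m t := by
  simp only [Sset, Finset.mem_filter, Finset.mem_univ, true_and]; omega

lemma Sset_succ {e : Fin (n + m)} {t : ℕ} (he : (e : ℕ) = n + t) :
    Sset n m (t + 1) = insert e (Sset n m t) := by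
  apply Finset.ext
  intro a
  simp only [Sset, Finset.mem_filter, Finset.mem_univ, true_and, Finset.mem_insert]
  constructor
  · intro h
    rcases Nat.lt_or_ge (a : ℕ) (n + t) with h' | h'
    · exact Or.inr h'
    · left; apply Fin.ext; omega
  · rintro (rfl | h) <;> omega

lemma blocked_mem {c : Finset (Fin j)} {t : ℕ} {ρ : Finset (Finset (Fin (n + m)))}
    (hρ : ρ ∈ ExtT n m j B c t) {i : Fin j} (hi : i ∈ c) : B i ∈ ρ := by
  rw [mem_ExtT] at hρ
  obtain ⟨hP, hr, hb⟩ := hρ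
  have : B i ∈ restrictPart ρ (oldSet n m) := by
    rw [hr]; exact Finset.mem_image_of_mem B (Finset.mem_univ i)
  rw [mem_restrictPart] at this
  obtain ⟨hne, C, hC, hCo⟩ := this
  have hsub : B i ⊆ C := hCo ▸ Finset.inter_subset_left
  have hCold : C ⊆ oldSet n m := hb i hi C hC hsub
  have : C = B i := by rw [← hCo, Finset.inter_eq_left.2 hCold]
  exact this ▸ hC

lemma not_allowed_eq (hπ : IsPartOn (oldSet n m) (Finset.image B Finset.univ))
    (hBinj : Function.Injective B) {c : Finset (Fin j)} {t : ℕ}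
    {ρ : Finset (Finset (Fin (n + m)))} (hρ : ρ ∈ ExtT n m j B c t) :
    ρ.filter (fun C => ¬ ∀ i ∈ c, ¬ B i ⊆ C) = c.image B := by
  apply Finset.ext
  intro C
  simp only [Finset.mem_filter, Finset.mem_image]
  constructor
  · rintro ⟨hC, hn⟩
    push_neg at hn
    obtain ⟨i, hi, hsub⟩ := hn
    have hmem := mem_ExtT.1 hρ
    have hCold : C ⊆ oldSet n m := hmem.2.2 i hi C hC hsub
    have hCr : C ∈ restrictPart ρ (oldSet n m) := by
      rw [mem_restrictPart]
      exact ⟨hmem.1.block_ne hC, C, hC, Finset.inter_eq_left.2 hCold⟩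
    rw [hmem.2.1] at hCr
    obtain ⟨i', _, hi'⟩ := Finset.mem_image.1 hCr
    have : i = i' := B_sub_eq hπ hBinj (hi' ▸ hsub)
    exact ⟨i, hi, by rw [this, hi']⟩
  · rintro ⟨i, hi, rfl⟩
    refine ⟨blocked_mem hρ hi, ?_⟩
    push_neg
    exact ⟨i, hi, subset_rfl⟩

lemma count_mult (hπ : IsPartOn (oldSet n m) (Finset.image B Finset.univ))
    (hBinj : Function.Injective B) {c : Finset (Fin j)} {t : ℕ} (ht : t ≤ m)
    {ρ : Finset (Finset (Fin (n + m)))} (hρ : ρ ∈ ExtT n m j B c t) :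
    (θ + (ρ.card : ℝ) * σ) +
      ∑ C ∈ ρ.filter (fun C => ∀ i ∈ c, ¬ B i ⊆ C), ((C.card : ℝ) - σ) =
    θ + (n : ℝ) - (∑ i ∈ c, ((B i).card : ℝ)) + σ * c.card + t := by
  have hmem := mem_ExtT.1 hρ
  have hsum : ∑ C ∈ ρ, C.card = n + t := by
    rw [hmem.1.sum_card, card_Sset n m t ht]
  have hsplit := Finset.sum_filter_add_sum_filter_not ρ
    (fun C => ∀ i ∈ c, ¬ B i ⊆ C) (fun C => C.card)
  rw [not_allowed_eq hπ hBinj hρ] at hsplit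
  have hNsum : ∑ C ∈ c.image B, C.card = ∑ i ∈ c, (B i).card :=
    Finset.sum_image (fun x _ y _ h => hBinj h)
  have hcardsplit : (ρ.filter (fun C => ∀ i ∈ c, ¬ B i ⊆ C)).card + (c.image B).card
      = ρ.card := by
    rw [← not_allowed_eq hπ hBinj hρ]
    simpa using Finset.card_filter_add_card_filter_not
      (s := ρ) (p := fun C => ∀ i ∈ c, ¬ B i ⊆ C)
  have hNcard : (c.image B).card = c.card := Finset.card_image_of_injective c hBinj
  have hA : ∑ C ∈ ρ.filter (fun C => ∀ i ∈ c, ¬ B i ⊆ C), ((C.card : ℝ) - σ) =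
      (∑ C ∈ ρ.filter (fun C => ∀ i ∈ c, ¬ B i ⊆ C), (C.card : ℝ)) -
        σ * (ρ.filter (fun C => ∀ i ∈ c, ¬ B i ⊆ C)).card := by
    rw [Finset.sum_sub_distrib, Finset.sum_const, nsmul_eq_mul]
    ring
  rw [hA]
  have h1 : (∑ C ∈ ρ.filter (fun C => ∀ i ∈ c, ¬ B i ⊆ C), (C.card : ℝ)) =
      ((n : ℝ) + t) - ∑ i ∈ c, ((B i).card : ℝ) := by
    have hnat : (∑ C ∈ ρ.filter (fun C => ∀ i ∈ c, ¬ B i ⊆ C), C.card) +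
        ∑ i ∈ c, (B i).card = n + t := by rw [← hNsum, hsplit, hsum]
    have := congrArg (Nat.cast (R := ℝ)) hnat
    push_cast at this ⊢
    linarith
  have h2 : ((ρ.filter (fun C => ∀ i ∈ c, ¬ B i ⊆ C)).card : ℝ) =
      (ρ.card : ℝ) - c.card := by
    have : ((ρ.filter (fun C => ∀ i ∈ c, ¬ B i ⊆ C)).card : ℕ) + c.card = ρ.card := by
      rw [← hNcard]; exact hcardsplit
    push_cast [← this]
    ring
  rw [h1, h2]
  ring

def insBlock {α : Type*} [DecidableEq α] (e : α) (ρ₀ : Finset (Finset α)) (C : Finset α) :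
    Finset (Finset α) :=
  if C = ∅ then insert {e} ρ₀ else insert (insert e C) (ρ₀.erase C)

def remBlock {α : Type*} [DecidableEq α] (e : α) (ρ : Finset (Finset α)) :
    Finset (Finset α) × Finset α :=
  (if blockAt ρ e = {e} then ρ.erase {e}
   else insert ((blockAt ρ e).erase e) (ρ.erase (blockAt ρ e)),
   (blockAt ρ e).erase e)

lemma erase_ne_empty {α : Type*} [DecidableEq α] {D : Finset α} {e : α}
    (he : e ∈ D) (hne : D ≠ {e}) : D.erase e ≠ ∅ := by
  intro h
  apply hne
  apply Finset.ext
  intro x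
  simp only [Finset.mem_singleton]
  constructor
  · intro hx
    by_contra hxe
    exact absurd (Finset.mem_erase.2 ⟨hxe, hx⟩) (by simp [h])
  · rintro rfl; exact he

variable {c : Finset (Fin j)} {t : ℕ} {e : Fin (n + m)}

lemma ins_mem (hπ : IsPartOn (oldSet n m) (Finset.image B Finset.univ))
    (he : (e : ℕ) = n + t) {ρ₀ : Finset (Finset (Fin (n + m)))} {C : Finset (Fin (n + m))}
    (hρ₀ : ρ₀ ∈ ExtT n m j B c t)
    (hC : C = ∅ ∨ (C ∈ ρ₀ ∧ ∀ i ∈ c, ¬ B i ⊆ C)) :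
    insBlock e ρ₀ C ∈ ExtT n m j B c (t + 1) := by
  obtain ⟨hP, hr, hb⟩ := mem_ExtT.1 hρ₀
  have heS := e_not_Sset (n := n) (m := m) he
  have heo := e_not_old (n := n) (m := m) he
  rcases hC with rfl | ⟨hC, hall⟩
  · rw [insBlock, if_pos rfl, mem_ExtT]
    refine ⟨?_, ?_, ?_⟩
    · rw [Sset_succ he]; exact isPartOn_insert_new hP heS
    · rw [restrictPart_insert_singleton heo]; exact hr
    · intro i hi C' hC' hsub
      rcases Finset.mem_insert.1 hC' with rfl | hC'
      · exfalso
        obtain ⟨a, ha⟩ := Finset.nonempty_iff_ne_empty.2 (B_ne hπ i)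
        have : a = e := Finset.mem_singleton.1 (hsub ha)
        exact heo (this ▸ B_sub hπ i ha)
      · exact hb i hi C' hC' hsub
  · have hCne := hP.block_ne hC
    rw [insBlock, if_neg hCne, mem_ExtT]
    refine ⟨?_, ?_, ?_⟩
    · rw [Sset_succ he]; exact isPartOn_insert_into hP heS hC
    · rw [restrictPart_update hC (Finset.insert_inter_of_notMem heo)]; exact hr
    · intro i hi C' hC' hsub
      rcases Finset.mem_insert.1 hC' with rfl | hC'
      · exfalso
        have heB : e ∉ B i := fun h => heo (B_sub hπ i h)
        have : B i ⊆ C := by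
          intro a ha
          rcases Finset.mem_insert.1 (hsub ha) with rfl | h
          · exact absurd ha heB
          · exact h
        exact hall i hi this
      · exact hb i hi C' (Finset.mem_of_mem_erase hC') hsub

lemma ins_weight (he : (e : ℕ) = n + t) {ρ₀ : Finset (Finset (Fin (n + m)))}
    {C : Finset (Fin (n + m))} (hρ₀ : ρ₀ ∈ ExtT n m j B c t) (hC : C = ∅ ∨ C ∈ ρ₀) :
    wW σ θ (insBlock e ρ₀ C) =
      wW σ θ ρ₀ * (if C = ∅ then θ + (ρ₀.card : ℝ) * σ else ((C.card : ℝ) - σ)) := by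
  obtain ⟨hP, hr, hb⟩ := mem_ExtT.1 hρ₀
  have heS := e_not_Sset (n := n) (m := m) he
  have heB : ∀ D ∈ ρ₀, e ∉ D := fun D hD => hP.not_mem_block heS hD
  rcases hC with rfl | hC
  · have hnot : ({e} : Finset (Fin (n + m))) ∉ ρ₀ :=
      fun h => heB _ h (Finset.mem_singleton_self e)
    rw [insBlock, if_pos rfl, if_pos rfl, wW, wW,
      Finset.card_insert_of_notMem hnot, Finset.prod_insert hnot, Finset.prod_range_succ]
    simp only [Finset.card_singleton, Nat.sub_self, risingFac_zero, one_mul]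
    ring
  · have hCne := hP.block_ne hC
    have heC : e ∉ C := heB C hC
    have hni : insert e C ∉ ρ₀.erase C :=
      fun h => heB _ (Finset.mem_of_mem_erase h) (Finset.mem_insert_self e C)
    have hkk : (ρ₀.erase C).card + 1 = ρ₀.card := Finset.card_erase_add_one hC
    have hCpos : 1 ≤ C.card := Finset.card_pos.2 (Finset.nonempty_iff_ne_empty.2 hCne)
    have hprod : ∏ D ∈ ρ₀, risingFac (1 - σ) (D.card - 1) =
        risingFac (1 - σ) (C.card - 1) * ∏ D ∈ ρ₀.erase C, risingFac (1 - σ) (D.card - 1) :=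
      (Finset.mul_prod_erase ρ₀ _ hC).symm
    have hf : risingFac (1 - σ) ((insert e C).card - 1) =
        ((C.card : ℝ) - σ) * risingFac (1 - σ) (C.card - 1) := by
      rw [Finset.card_insert_of_notMem heC, Nat.add_sub_cancel]
      conv_lhs => rw [show C.card = (C.card - 1) + 1 from (Nat.succ_pred_eq_of_pos hCpos).symm]
      rw [risingFac_succ]
      have hcast : ((C.card - 1 : ℕ) : ℝ) = (C.card : ℝ) - 1 := by
        push_cast [Nat.cast_sub hCpos]; ring
      rw [hcast]; ring
    rw [insBlock, if_neg hCne, if_neg hCne, wW, wW,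
      Finset.card_insert_of_notMem hni, hkk, Finset.prod_insert hni, hf, hprod]
    ring

lemma ins_rem (he : (e : ℕ) = n + t) {ρ₀ : Finset (Finset (Fin (n + m)))}
    {C : Finset (Fin (n + m))} (hρ₀ : ρ₀ ∈ ExtT n m j B c t) (hC : C = ∅ ∨ C ∈ ρ₀) :
    remBlock e (insBlock e ρ₀ C) = (ρ₀, C) := by
  obtain ⟨hP, hr, hb⟩ := mem_ExtT.1 hρ₀
  have heS := e_not_Sset (n := n) (m := m) he
  have heB : ∀ D ∈ ρ₀, e ∉ D := fun D hD => hP.not_mem_block heS hD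
  rcases hC with rfl | hC
  · have hnot : ({e} : Finset (Fin (n + m))) ∉ ρ₀ :=
      fun h => heB _ h (Finset.mem_singleton_self e)
    have hP' := isPartOn_insert_new hP heS
    have hba : blockAt (insert {e} ρ₀) e = {e} :=
      blockAt_eq hP' (Finset.mem_insert_self _ _) (Finset.mem_singleton_self e)
    rw [insBlock, if_pos rfl, remBlock, hba, if_pos rfl, Finset.erase_insert hnot,
      Finset.erase_singleton]
  · have hCne := hP.block_ne hC
    have heC : e ∉ C := heB C hC
    have hni : insert e C ∉ ρ₀.erase C :=
      fun h => heB _ (Finset.mem_of_mem_erase h) (Finset.mem_insert_self e C)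
    have hP' := isPartOn_insert_into hP heS hC
    have hba : blockAt (insert (insert e C) (ρ₀.erase C)) e = insert e C :=
      blockAt_eq hP' (Finset.mem_insert_self _ _) (Finset.mem_insert_self e C)
    have hne' : insert e C ≠ {e} := by
      intro h
      obtain ⟨a, ha⟩ := Finset.nonempty_iff_ne_empty.2 hCne
      have h1 : a ∈ insert e C := Finset.mem_insert_of_mem ha
      rw [h] at h1
      exact heC (Finset.mem_singleton.1 h1 ▸ ha)
    rw [insBlock, if_neg hCne, remBlock, hba, if_neg hne', Finset.erase_insert heC,
      Finset.erase_insert hni, Finset.insert_erase hC]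

lemma rem_spec (hπ : IsPartOn (oldSet n m) (Finset.image B Finset.univ))
    (he : (e : ℕ) = n + t) {ρ : Finset (Finset (Fin (n + m)))}
    (hρ : ρ ∈ ExtT n m j B c (t + 1)) :
    (remBlock e ρ).1 ∈ ExtT n m j B c t ∧
    ((remBlock e ρ).2 = ∅ ∨ ((remBlock e ρ).2 ∈ (remBlock e ρ).1 ∧
      ∀ i ∈ c, ¬ B i ⊆ (remBlock e ρ).2)) ∧
    insBlock e (remBlock e ρ).1 (remBlock e ρ).2 = ρ := by
  obtain ⟨hP0, hr, hb⟩ := mem_ExtT.1 hρ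
  have heS := e_not_Sset (n := n) (m := m) he
  have heo := e_not_old (n := n) (m := m) he
  have hP : IsPartOn (insert e (Sset n m t)) ρ := by rw [← Sset_succ he]; exact hP0
  obtain ⟨D₀, ⟨hD₀, heD₀⟩, _⟩ := hP.2.2 e (Finset.mem_insert_self _ _)
  have hba : blockAt ρ e = D₀ := blockAt_eq hP hD₀ heD₀
  by_cases hD1 : D₀ = {e}
  · subst hD1
    simp only [remBlock, hba, eq_self_iff_true, if_true, Finset.erase_singleton]
    refine ⟨?_, Or.inl trivial, ?_⟩
    · rw [mem_ExtT]
      refine ⟨isPartOn_erase_singleton hP heS hD₀, ?_, ?_⟩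
      · rw [← restrictPart_insert_singleton (P := ρ.erase {e}) heo, Finset.insert_erase hD₀]
        exact hr
      · intro i hi C' hC' hsub
        exact hb i hi C' (Finset.mem_of_mem_erase hC') hsub
    · rw [insBlock, if_pos rfl, Finset.insert_erase hD₀]
  · have hCne : D₀.erase e ≠ ∅ := erase_ne_empty heD₀ hD1
    have hCno : D₀.erase e ∉ ρ := by
      intro h
      obtain ⟨a, ha⟩ := Finset.nonempty_iff_ne_empty.2 hCne
      have heq : D₀.erase e = D₀ := hP.unique_block h hD₀ ha (Finset.mem_of_mem_erase ha)
      exact Finset.notMem_erase e D₀ (by rw [heq]; exact heD₀)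
    have hCnoE : D₀.erase e ∉ ρ.erase D₀ := fun h => hCno (Finset.mem_of_mem_erase h)
    have hall : ∀ i ∈ c, ¬ B i ⊆ D₀.erase e := by
      intro i hi hsub
      have : D₀ ⊆ oldSet n m := hb i hi D₀ hD₀ (hsub.trans (Finset.erase_subset e D₀))
      exact heo (this heD₀)
    have hinter : D₀.erase e ∩ oldSet n m = D₀ ∩ oldSet n m := by
      apply Finset.ext
      intro x
      simp only [Finset.mem_inter, Finset.mem_erase]
      constructor
      · rintro ⟨⟨_, h1⟩, h2⟩; exact ⟨h1, h2⟩
      · rintro ⟨h1, h2⟩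
        refine ⟨⟨?_, h1⟩, h2⟩
        rintro rfl; exact heo h2
    simp only [remBlock, hba, if_neg hD1]
    refine ⟨?_, Or.inr ⟨Finset.mem_insert_self _ _, hall⟩, ?_⟩
    · rw [mem_ExtT]
      refine ⟨isPartOn_erase_from hP heS hD₀ heD₀ hD1, ?_, ?_⟩
      · rw [restrictPart_update hD₀ hinter]; exact hr
      · intro i hi C' hC' hsub
        rcases Finset.mem_insert.1 hC' with rfl | hC'
        · exact absurd hsub (hall i hi)
        · exact hb i hi C' (Finset.mem_of_mem_erase hC') hsub
    · rw [insBlock, if_neg hCne, Finset.erase_insert hCnoE]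
      rw [show insert e (D₀.erase e) = D₀ from Finset.insert_erase heD₀]
      exact Finset.insert_erase hD₀

lemma step_sum (hπ : IsPartOn (oldSet n m) (Finset.image B Finset.univ))
    (hBinj : Function.Injective B) (ht : t < m) :
    ∑ ρ ∈ ExtT n m j B c (t + 1), wW σ θ ρ =
      (θ + (n : ℝ) - (∑ i ∈ c, ((B i).card : ℝ)) + σ * c.card + t) *
        ∑ ρ ∈ ExtT n m j B c t, wW σ θ ρ := by
  have hel : n + t < n + m := by omega
  set e : Fin (n + m) := ⟨n + t, hel⟩ with hedef
  have he : (e : ℕ) = n + t := rfl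
  have hcond : ∀ {ρ₀ : Finset (Finset (Fin (n + m)))} {C : Finset (Fin (n + m))},
      C ∈ insert ∅ (ρ₀.filter (fun C => ∀ i ∈ c, ¬ B i ⊆ C)) →
      C = ∅ ∨ (C ∈ ρ₀ ∧ ∀ i ∈ c, ¬ B i ⊆ C) := by
    intro ρ₀ C hC
    rcases Finset.mem_insert.1 hC with rfl | h
    · exact Or.inl rfl
    · exact Or.inr (Finset.mem_filter.1 h)
  have h1 : ∑ ρ ∈ ExtT n m j B c (t + 1), wW σ θ ρ =
      ∑ p ∈ (ExtT n m j B c t).sigma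
        (fun ρ₀ => insert ∅ (ρ₀.filter (fun C => ∀ i ∈ c, ¬ B i ⊆ C))),
        wW σ θ (insBlock e p.1 p.2) := by
    refine Finset.sum_bij' (i := fun ρ _ => ⟨(remBlock e ρ).1, (remBlock e ρ).2⟩)
      (j := fun p _ => insBlock e p.1 p.2) ?_ ?_ ?_ ?_ ?_
    · intro ρ hρ
      obtain ⟨hr1, hr2, _⟩ := rem_spec hπ he hρ
      rw [Finset.mem_sigma]
      refine ⟨hr1, ?_⟩
      rcases hr2 with h | ⟨h1, h2⟩
      · exact Finset.mem_insert.2 (Or.inl h)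
      · exact Finset.mem_insert.2 (Or.inr (Finset.mem_filter.2 ⟨h1, h2⟩))
    · intro p hp
      rw [Finset.mem_sigma] at hp
      exact ins_mem hπ he hp.1 (hcond hp.2)
    · intro ρ hρ
      exact (rem_spec hπ he hρ).2.2
    · intro p hp
      rw [Finset.mem_sigma] at hp
      obtain ⟨p1, p2⟩ := p
      have h := ins_rem he hp.1 ((hcond hp.2).imp id And.left)
      simp only
      rw [h]
    · intro ρ hρ
      exact (congrArg (wW σ θ) (rem_spec hπ he hρ).2.2).symm
  rw [h1, Finset.sum_sigma]
  have inner : ∀ ρ₀ ∈ ExtT n m j B c t,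
      (∑ C ∈ insert ∅ (ρ₀.filter (fun C => ∀ i ∈ c, ¬ B i ⊆ C)),
        wW σ θ (insBlock e ρ₀ C)) =
      (θ + (n : ℝ) - (∑ i ∈ c, ((B i).card : ℝ)) + σ * c.card + t) * wW σ θ ρ₀ := by
    intro ρ₀ hρ₀
    have hnm : (∅ : Finset (Fin (n + m))) ∉ ρ₀.filter (fun C => ∀ i ∈ c, ¬ B i ⊆ C) :=
      fun h => (mem_ExtT.1 hρ₀).1.2.1 (Finset.mem_filter.1 h).1
    rw [Finset.sum_insert hnm, ins_weight he hρ₀ (Or.inl rfl), if_pos rfl]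
    have hcg : ∀ C ∈ ρ₀.filter (fun C => ∀ i ∈ c, ¬ B i ⊆ C),
        wW σ θ (insBlock e ρ₀ C) = wW σ θ ρ₀ * ((C.card : ℝ) - σ) := by
      intro C hC
      obtain ⟨hC1, _⟩ := Finset.mem_filter.1 hC
      have hCne : C ≠ ∅ := (mem_ExtT.1 hρ₀).1.block_ne hC1
      rw [ins_weight he hρ₀ (Or.inr hC1), if_neg hCne]
    rw [Finset.sum_congr rfl hcg, ← Finset.mul_sum]
    have hM := count_mult (θ := θ) (σ := σ) hπ hBinj (le_of_lt ht) hρ₀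
    rw [← hM]
    ring
  rw [Finset.sum_congr rfl inner, ← Finset.mul_sum]

lemma base_sum (hπ : IsPartOn (oldSet n m) (Finset.image B Finset.univ)) :
    ExtT n m j B c 0 = {Finset.image B Finset.univ} := by
  apply Finset.ext
  intro ρ
  rw [mem_ExtT, Finset.mem_singleton]
  constructor
  · rintro ⟨hP, hr, _⟩
    rw [← hr]
    rw [Sset_zero] at hP
    exact (restrictPart_self hP).symm
  · rintro rfl
    refine ⟨by rw [Sset_zero]; exact hπ, restrictPart_self hπ, ?_⟩
    intro i hi C hC hsub
    exact hπ.1 C hC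

lemma L1 (hπ : IsPartOn (oldSet n m) (Finset.image B Finset.univ))
    (hBinj : Function.Injective B) (c : Finset (Fin j)) (t : ℕ) (ht : t ≤ m) :
    ∑ ρ ∈ ExtT n m j B c t, wW σ θ ρ =
      wW σ θ (Finset.image B Finset.univ) *
        risingFac (θ + (n : ℝ) - (∑ i ∈ c, ((B i).card : ℝ)) + σ * c.card) t := by
  induction t with
  | zero => rw [base_sum hπ, Finset.sum_singleton, risingFac_zero, mul_one]
  | succ t ih =>
    rw [step_sum hπ hBinj (by omega), ih (by omega), risingFac_succ]
    ring

lemma Scount_zero_iff {ρ : Finset (Finset (Fin (n + m)))} {i : Fin j} :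
    Scount n m (B i) ρ = 0 ↔ ∀ C ∈ ρ, B i ⊆ C → C ⊆ oldSet n m := by
  rw [Scount, Finset.sum_eq_zero_iff]
  constructor
  · intro h C hC hsub
    have := h C (Finset.mem_filter.2 ⟨hC, hsub⟩)
    rw [Finset.card_eq_zero, Finset.sdiff_eq_empty_iff_subset] at this
    exact this
  · intro h C hC
    obtain ⟨hC1, hC2⟩ := Finset.mem_filter.1 hC
    rw [Finset.card_eq_zero, Finset.sdiff_eq_empty_iff_subset]
    exact h C hC1 hC2

lemma ext_filter {c : Finset (Fin j)} :
    (extensions n m (Finset.image B Finset.univ)).filter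
      (fun ρ => ∀ i ∈ c, Scount n m (B i) ρ = 0) = ExtT n m j B c m := by
  apply Finset.ext
  intro ρ
  rw [Finset.mem_filter, mem_ExtT, extensions, Finset.mem_filter]
  rw [Sset_last]
  simp only [Finset.mem_univ, true_and]
  constructor
  · rintro ⟨⟨h1, h2⟩, h3⟩
    exact ⟨h1, h2, fun i hi => Scount_zero_iff.1 (h3 i hi)⟩
  · rintro ⟨h1, h2, h3⟩
    exact ⟨⟨h1, h2⟩, fun i hi => Scount_zero_iff.2 (h3 i hi)⟩

lemma ext_eq_ExtT : extensions n m (Finset.image B Finset.univ) = ExtT n m j B ∅ m := by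
  rw [← ext_filter (c := ∅)]
  symm
  apply Finset.filter_true_of_mem
  intro ρ _ i hi
  exact absurd hi (Finset.notMem_empty i)

lemma denom_sum (hπ : IsPartOn (oldSet n m) (Finset.image B Finset.univ))
    (hBinj : Function.Injective B) :
    ∑ ρ ∈ extensions n m (Finset.image B Finset.univ), wW σ θ ρ =
      wW σ θ (Finset.image B Finset.univ) * risingFac (θ + n) m := by
  rw [ext_eq_ExtT, L1 hπ hBinj ∅ m le_rfl]
  norm_num

lemma binom_incl_excl (u w' jj : ℕ) (hw : w' ≤ jj) (hu : u ≤ jj) :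
    ∑ v ∈ Finset.Icc w' jj, (-1 : ℝ) ^ (v - w') * ((v.choose w' : ℝ) * (u.choose v : ℝ)) =
      if u = w' then 1 else 0 := by
  rcases Nat.lt_or_ge u w' with hul | huw
  · rw [if_neg (by omega : ¬ u = w')]
    apply Finset.sum_eq_zero
    intro v hv
    have : u < v := lt_of_lt_of_le hul (Finset.mem_Icc.1 hv).1
    rw [Nat.choose_eq_zero_of_lt this]
    simp
  · have hIcc : ∑ v ∈ Finset.Icc w' jj, (-1 : ℝ) ^ (v - w') *
        ((v.choose w' : ℝ) * (u.choose v : ℝ)) =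
        ∑ v ∈ Finset.Icc w' u, (-1 : ℝ) ^ (v - w') *
        ((v.choose w' : ℝ) * (u.choose v : ℝ)) := by
      symm
      apply Finset.sum_subset (Finset.Icc_subset_Icc_right hu)
      intro v hv hv'
      have : u < v := by
        rw [Finset.mem_Icc] at hv hv'
        omega
      rw [Nat.choose_eq_zero_of_lt this]
      simp
    rw [hIcc, ← Finset.Ico_add_one_right_eq_Icc, Finset.sum_Ico_eq_sum_range]
    have hrw : u + 1 - w' = (u - w') + 1 := by omega
    rw [hrw]
    have hterm : ∀ i ∈ Finset.range ((u - w') + 1),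
        (-1 : ℝ) ^ (w' + i - w') * (((w' + i).choose w' : ℝ) * (u.choose (w' + i) : ℝ)) =
        (u.choose w' : ℝ) * ((-1 : ℝ) ^ i * ((u - w').choose i : ℝ)) := by
      intro i hi
      have hi' : i ≤ u - w' := by
        rw [Finset.mem_range] at hi; omega
      have h1 : w' + i ≤ u := by omega
      have h2 : w' ≤ w' + i := Nat.le_add_right _ _
      have hcc := Nat.choose_mul (n := u) h2
      rw [Nat.add_sub_cancel_left] at hcc
      have : (w' + i).choose w' * u.choose (w' + i) = u.choose w' * (u - w').choose i := by
        rw [Nat.mul_comm ((w' + i).choose w') (u.choose (w' + i)), hcc]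
      have hcast := congrArg (Nat.cast (R := ℝ)) this
      push_cast at hcast
      rw [Nat.add_sub_cancel_left, hcast]
      ring
    rw [Finset.sum_congr rfl hterm, ← Finset.mul_sum]
    have halt : (∑ i ∈ Finset.range ((u - w') + 1),
        (-1 : ℝ) ^ i * ((u - w').choose i : ℝ)) =
        if u - w' = 0 then 1 else 0 := by
      have := Int.alternating_sum_range_choose (n := u - w')
      have hc := congrArg (Int.cast (R := ℝ)) this
      push_cast at hc
      rw [hc]
    rw [halt]
    by_cases h : u = w'
    · subst h
      simp
    · rw [if_neg (by omega : ¬ u - w' = 0), if_neg h, mul_zero]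

lemma indicator_ie {x : ℕ} (hx : x ≤ j) (ρ : Finset (Finset (Fin (n + m)))) :
    (if RcntB n m j B ρ = x then (1 : ℝ) else 0) =
      ∑ v ∈ Finset.Icc (j - x) j, (-1 : ℝ) ^ (v - (j - x)) * (v.choose (j - x) : ℝ) *
        ∑ cc ∈ Finset.powersetCard v (Finset.univ : Finset (Fin j)),
          (if ∀ i ∈ cc, Scount n m (B i) ρ = 0 then (1 : ℝ) else 0) := by
  set U := Finset.univ.filter (fun i : Fin j => Scount n m (B i) ρ = 0) with hU
  have hUle : U.card ≤ j := by
    calc U.card ≤ (Finset.univ : Finset (Fin j)).card := Finset.card_filter_le _ _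
      _ = j := by rw [Finset.card_univ, Fintype.card_fin]
  have hinner : ∀ v, (∑ cc ∈ Finset.powersetCard v (Finset.univ : Finset (Fin j)),
      (if ∀ i ∈ cc, Scount n m (B i) ρ = 0 then (1 : ℝ) else 0)) = (U.card.choose v : ℝ) := by
    intro v
    rw [Finset.sum_boole]
    have hfe : (Finset.powersetCard v (Finset.univ : Finset (Fin j))).filter
        (fun cc => ∀ i ∈ cc, Scount n m (B i) ρ = 0) = Finset.powersetCard v U := by
      apply Finset.ext
      intro cc
      simp only [Finset.mem_filter, Finset.mem_powersetCard, hU]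
      constructor
      · rintro ⟨⟨_, hcard⟩, hall⟩
        refine ⟨?_, hcard⟩
        intro i hi
        exact Finset.mem_filter.2 ⟨Finset.mem_univ i, hall i hi⟩
      · rintro ⟨hsub, hcard⟩
        exact ⟨⟨Finset.subset_univ cc, hcard⟩, fun i hi => (Finset.mem_filter.1 (hsub hi)).2⟩
    rw [hfe, Finset.card_powersetCard]
  have hcard : RcntB n m j B ρ + U.card = j := by
    have h2 : Finset.univ.filter (fun i : Fin j => ¬ Scount n m (B i) ρ ≠ 0) = U :=
      Finset.filter_congr (fun i _ => by simp)
    have h3 := Finset.card_filter_add_card_filter_not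
      (s := (Finset.univ : Finset (Fin j))) (p := fun i => Scount n m (B i) ρ ≠ 0)
    rw [h2, Finset.card_univ, Fintype.card_fin] at h3
    rw [RcntB]
    exact h3
  have hiff : (RcntB n m j B ρ = x) ↔ (U.card = j - x) := by omega
  rw [if_congr hiff rfl rfl]
  have hsc : (∑ v ∈ Finset.Icc (j - x) j, (-1 : ℝ) ^ (v - (j - x)) * (v.choose (j - x) : ℝ) *
      ∑ cc ∈ Finset.powersetCard v (Finset.univ : Finset (Fin j)),
        (if ∀ i ∈ cc, Scount n m (B i) ρ = 0 then (1 : ℝ) else 0)) =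
      ∑ v ∈ Finset.Icc (j - x) j, (-1 : ℝ) ^ (v - (j - x)) *
        ((v.choose (j - x) : ℝ) * (U.card.choose v : ℝ)) :=
    Finset.sum_congr rfl (fun v _ => by rw [hinner v, mul_assoc])
  rw [hsc, binom_incl_excl U.card (j - x) j (by omega) hUle]

lemma num_sum (hπ : IsPartOn (oldSet n m) (Finset.image B Finset.univ))
    (hBinj : Function.Injective B) {x : ℕ} (hx : x ≤ j) :
    ∑ ρ ∈ extensions n m (Finset.image B Finset.univ),
      (if RcntB n m j B ρ = x then (1 : ℝ) else 0) * wW σ θ ρ =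
    wW σ θ (Finset.image B Finset.univ) *
      ∑ v ∈ Finset.Icc (j - x) j, (-1 : ℝ) ^ (v - (j - x)) * (v.choose (j - x) : ℝ) *
        ∑ cc ∈ Finset.powersetCard v (Finset.univ : Finset (Fin j)),
          risingFac (θ + (n : ℝ) - (∑ i ∈ cc, ((B i).card : ℝ)) + σ * v) m := by
  have key : ∀ (v : ℕ), ∀ cc ∈ Finset.powersetCard v (Finset.univ : Finset (Fin j)),
      (∑ ρ ∈ extensions n m (Finset.image B Finset.univ),
        (if ∀ i ∈ cc, Scount n m (B i) ρ = 0 then (1 : ℝ) else 0) * wW σ θ ρ) =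
      wW σ θ (Finset.image B Finset.univ) *
        risingFac (θ + (n : ℝ) - (∑ i ∈ cc, ((B i).card : ℝ)) + σ * v) m := by
    intro v cc hcc
    have hv : cc.card = v := (Finset.mem_powersetCard.1 hcc).2
    have h1 : (∑ ρ ∈ extensions n m (Finset.image B Finset.univ),
        (if ∀ i ∈ cc, Scount n m (B i) ρ = 0 then (1 : ℝ) else 0) * wW σ θ ρ) =
        ∑ ρ ∈ (extensions n m (Finset.image B Finset.univ)).filter
          (fun ρ => ∀ i ∈ cc, Scount n m (B i) ρ = 0), wW σ θ ρ := by
      rw [Finset.sum_filter]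
      apply Finset.sum_congr rfl
      intro ρ _
      rw [ite_mul, one_mul, zero_mul]
    rw [h1, ext_filter, L1 hπ hBinj cc m le_rfl, hv]
  calc ∑ ρ ∈ extensions n m (Finset.image B Finset.univ),
      (if RcntB n m j B ρ = x then (1 : ℝ) else 0) * wW σ θ ρ
      = ∑ ρ ∈ extensions n m (Finset.image B Finset.univ),
        ∑ v ∈ Finset.Icc (j - x) j,
          ∑ cc ∈ Finset.powersetCard v (Finset.univ : Finset (Fin j)),
            (-1 : ℝ) ^ (v - (j - x)) * (v.choose (j - x) : ℝ) *
              ((if ∀ i ∈ cc, Scount n m (B i) ρ = 0 then (1 : ℝ) else 0) * wW σ θ ρ) := by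
        apply Finset.sum_congr rfl
        intro ρ _
        rw [indicator_ie hx ρ, Finset.sum_mul]
        apply Finset.sum_congr rfl
        intro v _
        rw [mul_assoc, Finset.sum_mul, Finset.mul_sum]
    _ = ∑ v ∈ Finset.Icc (j - x) j,
          ∑ cc ∈ Finset.powersetCard v (Finset.univ : Finset (Fin j)),
            (-1 : ℝ) ^ (v - (j - x)) * (v.choose (j - x) : ℝ) *
              ∑ ρ ∈ extensions n m (Finset.image B Finset.univ),
                (if ∀ i ∈ cc, Scount n m (B i) ρ = 0 then (1 : ℝ) else 0) * wW σ θ ρ := by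
        rw [Finset.sum_comm]
        apply Finset.sum_congr rfl
        intro v _
        rw [Finset.sum_comm]
        apply Finset.sum_congr rfl
        intro cc _
        rw [Finset.mul_sum]
    _ = ∑ v ∈ Finset.Icc (j - x) j,
          ∑ cc ∈ Finset.powersetCard v (Finset.univ : Finset (Fin j)),
            (-1 : ℝ) ^ (v - (j - x)) * (v.choose (j - x) : ℝ) *
              (wW σ θ (Finset.image B Finset.univ) *
                risingFac (θ + (n : ℝ) - (∑ i ∈ cc, ((B i).card : ℝ)) + σ * v) m) := by
        apply Finset.sum_congr rfl
        intro v _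
        apply Finset.sum_congr rfl
        intro cc hcc
        rw [key v cc hcc]
    _ = wW σ θ (Finset.image B Finset.univ) *
          ∑ v ∈ Finset.Icc (j - x) j, (-1 : ℝ) ^ (v - (j - x)) * (v.choose (j - x) : ℝ) *
            ∑ cc ∈ Finset.powersetCard v (Finset.univ : Finset (Fin j)),
              risingFac (θ + (n : ℝ) - (∑ i ∈ cc, ((B i).card : ℝ)) + σ * v) m := by
        rw [Finset.mul_sum]
        apply Finset.sum_congr rfl
        intro v _
        rw [Finset.mul_sum, Finset.mul_sum]
        apply Finset.sum_congr rfl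
        intro cc _
        ring

lemma j_pos (hn : 1 ≤ n) (hπ : IsPartOn (oldSet n m) (Finset.image B Finset.univ)) :
    0 < j := by
  have ha : (⟨0, by omega⟩ : Fin (n + m)) ∈ oldSet n m := by
    simp [oldSet]; omega
  obtain ⟨C, ⟨hC, _⟩, _⟩ := hπ.2.2 _ ha
  obtain ⟨i, _, _⟩ := Finset.mem_image.1 hC
  exact i.pos

lemma theta_ne (hj : 0 < j) (hVnj : 0 < EPV σ θ n j) : θ ≠ 0 := by
  rintro rfl
  have hz : (∏ i ∈ Finset.range j, ((0 : ℝ) + (i : ℝ) * σ)) = 0 :=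
    Finset.prod_eq_zero (Finset.mem_range.2 hj) (by simp)
  rw [EPV] at hVnj
  rw [hz, zero_div] at hVnj
  exact lt_irrefl 0 hVnj

lemma prod_theta_pos (hσ0 : 0 < σ) (hθ : -σ < θ) (hθ0 : θ ≠ 0) {k : ℕ} (hk : 0 < k) :
    (∏ i ∈ Finset.range k, (θ + (i : ℝ) * σ)) =
      θ * ∏ i ∈ Finset.Ico 1 k, (θ + (i : ℝ) * σ) ∧
    0 < ∏ i ∈ Finset.Ico 1 k, (θ + (i : ℝ) * σ) := by
  constructor
  · rw [Finset.prod_range_eq_mul_Ico _ hk]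
    norm_num
  · apply Finset.prod_pos
    intro i hi
    have h1 : (1 : ℝ) ≤ (i : ℝ) := by exact_mod_cast (Finset.mem_Ico.1 hi).1
    nlinarith

lemma risingFac_theta (hσ1 : σ < 1) (hθ : -σ < θ) {N : ℕ} (hN : 0 < N) :
    risingFac θ N = θ * ∏ i ∈ Finset.Ico 1 N, (θ + (i : ℝ)) ∧
    0 < ∏ i ∈ Finset.Ico 1 N, (θ + (i : ℝ)) := by
  constructor
  · rw [risingFac, Finset.prod_range_eq_mul_Ico _ hN]
    norm_num
  · apply Finset.prod_pos
    intro i hi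
    have h1 : (1 : ℝ) ≤ (i : ℝ) := by exact_mod_cast (Finset.mem_Ico.1 hi).1
    nlinarith

lemma EPV_pos (hσ0 : 0 < σ) (hσ1 : σ < 1) (hθ : -σ < θ) (hθ0 : θ ≠ 0)
    {N k : ℕ} (hN : 0 < N) (hk : 0 < k) : 0 < EPV σ θ N k := by
  obtain ⟨ha1, ha2⟩ := prod_theta_pos (θ := θ) hσ0 hθ hθ0 hk
  obtain ⟨hb1, hb2⟩ := risingFac_theta (σ := σ) hσ1 hθ hN
  rw [EPV]
  rw [ha1, hb1, mul_div_mul_left _ _ hθ0]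
  exact div_pos ha2 hb2

lemma wpi_ne (hσ0 : 0 < σ) (hσ1 : σ < 1) (hθ : -σ < θ) (hθ0 : θ ≠ 0)
    {ρ : Finset (Finset (Fin (n + m)))} : wW σ θ ρ ≠ 0 := by
  rw [wW]
  apply mul_ne_zero
  · apply Finset.prod_ne_zero_iff.2
    intro i _
    rcases Nat.eq_zero_or_pos i with h | h
    · simpa [h] using hθ0
    · have : (1 : ℝ) ≤ (i : ℝ) := by exact_mod_cast h
      nlinarith
  · apply ne_of_gt
    apply Finset.prod_pos
    intro C _
    apply risingFac_pos
    linarith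

lemma gibbs_pos (hn : 1 ≤ n) (hσ0 : 0 < σ) (hσ1 : σ < 1) (hθ : -σ < θ) (hθ0 : θ ≠ 0)
    {ρ : Finset (Finset (Fin (n + m)))}
    (hρ : ρ ∈ extensions n m (Finset.image B Finset.univ)) :
    0 < gibbsW σ (EPV σ θ (n + m)) ρ := by
  have hP : IsPartOn (Finset.univ : Finset (Fin (n + m))) ρ :=
    (Finset.mem_filter.1 hρ).2.1
  have hcard : 0 < ρ.card := hP.card_pos ⟨⟨0, by omega⟩, Finset.mem_univ _⟩
  rw [gibbsW]
  apply mul_pos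
  · exact EPV_pos hσ0 hσ1 hθ hθ0 (by omega) hcard
  · apply Finset.prod_pos
    intro C _
    apply risingFac_pos
    linarith

lemma witness_exists (hn : 1 ≤ n)
    (hπ : IsPartOn (oldSet n m) (Finset.image B Finset.univ)) (hBinj : Function.Injective B)
    {x : ℕ} (hxj : x ≤ j) (hxm : x ≤ m) :
    ∃ ρ ∈ extensions n m (Finset.image B Finset.univ), RcntB n m j B ρ = x := by
  classical
  set E : Fin j → Finset (Fin (n + m)) :=
    fun i => Finset.univ.filter (fun a => (a : ℕ) = n + (i : ℕ) ∧ (i : ℕ) < x) with hE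
  set Fb : Finset (Fin (n + m)) := Finset.univ.filter (fun a => n + x ≤ (a : ℕ)) with hF
  set ρw : Finset (Finset (Fin (n + m))) :=
    (Finset.univ.image (fun i : Fin j => B i ∪ E i)) ∪ (if x < m then {Fb} else ∅) with hρw
  have hBold : ∀ (i : Fin j), ∀ a ∈ B i, (a : ℕ) < n := by
    intro i a ha
    have := B_sub hπ i ha
    simpa [oldSet] using this
  have hEmem : ∀ (i : Fin j) (a : Fin (n + m)),
      a ∈ E i ↔ ((a : ℕ) = n + (i : ℕ) ∧ (i : ℕ) < x) := by
    intro i a; simp [hE]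
  have hFmem : ∀ a : Fin (n + m), a ∈ Fb ↔ n + x ≤ (a : ℕ) := by
    intro a; simp [hF]
  have hmemw : ∀ D, D ∈ ρw ↔ (∃ i, D = B i ∪ E i) ∨ (x < m ∧ D = Fb) := by
    intro D
    rw [hρw, Finset.mem_union, Finset.mem_image]
    constructor
    · rintro (⟨i, _, hi⟩ | h)
      · exact Or.inl ⟨i, hi.symm⟩
      · split_ifs at h with hxm'
        · exact Or.inr ⟨hxm', Finset.mem_singleton.1 h⟩
        · exact absurd h (Finset.notMem_empty D)
    · rintro (⟨i, rfl⟩ | ⟨h1, rfl⟩)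
      · exact Or.inl ⟨i, Finset.mem_univ i, rfl⟩
      · right; rw [if_pos h1]; exact Finset.mem_singleton_self _
  have hBEuniq : ∀ (a : Fin (n + m)) (i i' : Fin j),
      a ∈ B i ∪ E i → a ∈ B i' ∪ E i' → i = i' := by
    intro a i i' h1 h2
    rcases Finset.mem_union.1 h1 with hb1 | he1
    · rcases Finset.mem_union.1 h2 with hb2 | he2
      · exact hBinj (hπ.unique_block (Finset.mem_image_of_mem B (Finset.mem_univ i))
          (Finset.mem_image_of_mem B (Finset.mem_univ i')) hb1 hb2)
      · have := hBold i a hb1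
        have := (hEmem i' a).1 he2
        omega
    · rcases Finset.mem_union.1 h2 with hb2 | he2
      · have := hBold i' a hb2
        have := (hEmem i a).1 he1
        omega
      · have ha1 := (hEmem i a).1 he1
        have ha2 := (hEmem i' a).1 he2
        apply Fin.ext
        omega
  have hFdisj : ∀ (a : Fin (n + m)) (i : Fin j), a ∈ Fb → a ∉ B i ∪ E i := by
    intro a i hFa hBa
    have hge := (hFmem a).1 hFa
    rcases Finset.mem_union.1 hBa with hb | he
    · have := hBold i a hb; omega
    · have := (hEmem i a).1 he; omega
  have huniq : ∀ (a : Fin (n + m)), ∀ D₁ ∈ ρw, ∀ D₂ ∈ ρw, a ∈ D₁ → a ∈ D₂ → D₁ = D₂ := by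
    intro a D₁ hD₁ D₂ hD₂ ha₁ ha₂
    rcases (hmemw D₁).1 hD₁ with ⟨i, rfl⟩ | ⟨_, rfl⟩ <;>
      rcases (hmemw D₂).1 hD₂ with ⟨i', rfl⟩ | ⟨_, rfl⟩
    · rw [hBEuniq a i i' ha₁ ha₂]
    · exact absurd ha₁ (hFdisj a i ha₂)
    · exact absurd ha₂ (hFdisj a i' ha₁)
    · rfl
  have hcover : ∀ a : Fin (n + m), ∃ D ∈ ρw, a ∈ D := by
    intro a
    rcases Nat.lt_or_ge (a : ℕ) n with h1 | h1
    · have ha : a ∈ oldSet n m := by simp [oldSet, h1]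
      obtain ⟨C, ⟨hC, haC⟩, _⟩ := hπ.2.2 a ha
      obtain ⟨i, _, rfl⟩ := Finset.mem_image.1 hC
      exact ⟨B i ∪ E i, (hmemw _).2 (Or.inl ⟨i, rfl⟩),
        Finset.mem_union_left _ haC⟩
    · rcases Nat.lt_or_ge (a : ℕ) (n + x) with h2 | h2
      · have hix : (a : ℕ) - n < j := by omega
        refine ⟨B ⟨(a : ℕ) - n, hix⟩ ∪ E ⟨(a : ℕ) - n, hix⟩,
          (hmemw _).2 (Or.inl ⟨_, rfl⟩), Finset.mem_union_right _ ?_⟩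
        rw [hEmem]
        constructor <;> simp <;> omega
      · have hxm' : x < m := by
          have := a.isLt; omega
        exact ⟨Fb, (hmemw _).2 (Or.inr ⟨hxm', rfl⟩), (hFmem a).2 h2⟩
  have hne : ∀ D ∈ ρw, D ≠ ∅ := by
    intro D hD
    rcases (hmemw D).1 hD with ⟨i, rfl⟩ | ⟨hxm', rfl⟩
    · intro h
      apply B_ne hπ i
      rw [← Finset.subset_empty, ← h]
      exact Finset.subset_union_left
    · intro h
      have : (⟨n + x, by omega⟩ : Fin (n + m)) ∈ Fb := (hFmem _).2 (by simp)
      rw [h] at this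
      exact Finset.notMem_empty _ this
  have W1 : IsPartOn (Finset.univ : Finset (Fin (n + m))) ρw := by
    refine ⟨fun D _ => Finset.subset_univ D, ?_, ?_⟩
    · intro h; exact hne ∅ h rfl
    · intro a _
      obtain ⟨D, hD, haD⟩ := hcover a
      exact ⟨D, ⟨hD, haD⟩, fun D' ⟨hD', haD'⟩ => huniq a D' hD' D hD haD' haD⟩
  have hints : ∀ i : Fin j, (B i ∪ E i) ∩ oldSet n m = B i := by
    intro i
    apply Finset.ext
    intro a
    simp only [Finset.mem_inter, Finset.mem_union]
    constructor
    · rintro ⟨hBE | hE', hold⟩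
      · exact hBE
      · have := (hEmem i a).1 hE'
        have : (a : ℕ) < n := by simpa [oldSet] using hold
        omega
    · intro h
      exact ⟨Or.inl h, B_sub hπ i h⟩
  have W2 : restrictPart ρw (oldSet n m) = Finset.image B Finset.univ := by
    apply Finset.ext
    intro D
    rw [mem_restrictPart]
    constructor
    · rintro ⟨hDne, C, hC, hCo⟩
      rcases (hmemw C).1 hC with ⟨i, rfl⟩ | ⟨_, rfl⟩
      · rw [hints i] at hCo
        rw [← hCo]
        exact Finset.mem_image_of_mem B (Finset.mem_univ i)
      · exfalso
        apply hDne
        rw [← hCo]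
        apply Finset.eq_empty_of_forall_notMem
        intro a ha
        obtain ⟨haF, haO⟩ := Finset.mem_inter.1 ha
        have := (hFmem a).1 haF
        have : (a : ℕ) < n := by simpa [oldSet] using haO
        omega
    · intro hD
      obtain ⟨i, _, rfl⟩ := Finset.mem_image.1 hD
      exact ⟨B_ne hπ i, B i ∪ E i, (hmemw _).2 (Or.inl ⟨i, rfl⟩), hints i⟩
  have hfilter : ∀ i : Fin j, ρw.filter (fun C => B i ⊆ C) = {B i ∪ E i} := by
    intro i
    apply Finset.ext
    intro C
    rw [Finset.mem_filter, Finset.mem_singleton]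
    constructor
    · rintro ⟨hC, hsub⟩
      obtain ⟨a, ha⟩ := Finset.nonempty_iff_ne_empty.2 (B_ne hπ i)
      rcases (hmemw C).1 hC with ⟨i', rfl⟩ | ⟨_, rfl⟩
      · have : i = i' := hBEuniq a i i' (Finset.mem_union_left _ ha) (hsub ha)
        rw [this]
      · exact absurd (hsub ha) (fun h => hFdisj a i h (Finset.mem_union_left _ ha))
    · rintro rfl
      exact ⟨(hmemw _).2 (Or.inl ⟨i, rfl⟩), Finset.subset_union_left⟩
  have hScount : ∀ i : Fin j, Scount n m (B i) ρw = if (i : ℕ) < x then 1 else 0 := by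
    intro i
    rw [Scount, hfilter i, Finset.sum_singleton]
    have hdiff : (B i ∪ E i) \ oldSet n m = E i := by
      apply Finset.ext
      intro a
      simp only [Finset.mem_sdiff, Finset.mem_union]
      constructor
      · rintro ⟨hBE | hE', hold⟩
        · exact absurd (B_sub hπ i hBE) hold
        · exact hE'
      · intro h
        have := (hEmem i a).1 h
        refine ⟨Or.inr h, ?_⟩
        simp only [oldSet, Finset.mem_filter, Finset.mem_univ, true_and]
        omega
    rw [hdiff]
    by_cases hix : (i : ℕ) < x
    · rw [if_pos hix]
      have : E i = {(⟨n + (i : ℕ), by omega⟩ : Fin (n + m))} := by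
        apply Finset.ext
        intro a
        rw [hEmem, Finset.mem_singleton]
        constructor
        · rintro ⟨h1, _⟩
          apply Fin.ext
          simpa using h1
        · rintro rfl
          exact ⟨rfl, hix⟩
      rw [this, Finset.card_singleton]
    · rw [if_neg hix]
      rw [Finset.card_eq_zero]
      apply Finset.eq_empty_of_forall_notMem
      intro a ha
      exact hix ((hEmem i a).1 ha).2
  refine ⟨ρw, ?_, ?_⟩
  · rw [extensions, Finset.mem_filter]
    exact ⟨Finset.mem_univ _, W1, W2⟩
  · rw [RcntB]
    have hfe : Finset.univ.filter (fun i : Fin j => Scount n m (B i) ρw ≠ 0) =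
        Finset.univ.filter (fun i : Fin j => (i : ℕ) < x) := by
      apply Finset.filter_congr
      intro i _
      rw [hScount i]
      by_cases hix : (i : ℕ) < x <;> simp [hix]
    rw [hfe]
    have him : Finset.univ.filter (fun i : Fin j => (i : ℕ) < x) =
        (Finset.univ : Finset (Fin x)).image
          (fun k : Fin x => (⟨(k : ℕ), by omega⟩ : Fin j)) := by
      apply Finset.ext
      intro i
      simp only [Finset.mem_filter, Finset.mem_univ, true_and, Finset.mem_image]
      constructor
      · intro h
        refine ⟨⟨(i : ℕ), h⟩, ?_⟩
        apply Fin.ext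
        rfl
      · rintro ⟨k, rfl⟩
        exact k.isLt
    rw [him, Finset.card_image_of_injective _ (fun k k' h => by
      apply Fin.ext
      simpa using congrArg Fin.val h), Finset.card_univ, Fintype.card_fin]


/-- Ewens–Pitman, distribution of the number of re-observed old species,
given complete information, with strict positivity. -/
theorem looking_backward_prob_complete_EP
    (n m j : ℕ) (hn : 1 ≤ n) (hm : 1 ≤ m)
    (σ θ : ℝ) (hσ0 : 0 < σ) (hσ1 : σ < 1) (hθ : -σ < θ)
    (B : Fin j → Finset (Fin (n + m))) (hBinj : Function.Injective B)
    (hπ : IsPartOn (oldSet n m) (Finset.image B Finset.univ))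
    (hVnj : 0 < EPV σ θ n j)
    (x : ℕ) (hx : x ≤ min j m) :
    (condExpPi σ (EPV σ θ) n m (Finset.image B Finset.univ)
        (fun ρ => if RcntB n m j B ρ = x then (1 : ℝ) else 0) =
      (1 / risingFac (θ + n) m) * (-1 : ℝ) ^ j *
        ∑ v ∈ Finset.Icc (j - x) j,
          (Nat.choose v (j - x) : ℝ) * (-1 : ℝ) ^ (v + x) *
            ∑ c ∈ (Finset.univ : Finset (Fin j)).powersetCard v,
              risingFac (θ + (n : ℝ) - (∑ i ∈ c, ((B i).card : ℝ)) + σ * v) m) ∧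
    0 < condExpPi σ (EPV σ θ) n m (Finset.image B Finset.univ)
        (fun ρ => if RcntB n m j B ρ = x then (1 : ℝ) else 0) := by
  have hxj : x ≤ j := le_trans hx (min_le_left _ _)
  have hxm : x ≤ m := le_trans hx (min_le_right _ _)
  have hj : 0 < j := j_pos hn hπ
  have hθ0 : θ ≠ 0 := theta_ne hj hVnj
  obtain ⟨ρw, hρw, hRw⟩ := witness_exists hn hπ hBinj hxj hxm
  have hgibbs : ∀ ρ ∈ extensions n m (Finset.image B Finset.univ),
      0 < gibbsW σ (EPV σ θ (n + m)) ρ := fun ρ h => gibbs_pos hn hσ0 hσ1 hθ hθ0 h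
  have hDenPos : 0 < ∑ ρ ∈ extensions n m (Finset.image B Finset.univ),
      gibbsW σ (EPV σ θ (n + m)) ρ := Finset.sum_pos hgibbs ⟨ρw, hρw⟩
  have hNumPos : 0 < ∑ ρ ∈ extensions n m (Finset.image B Finset.univ),
      (if RcntB n m j B ρ = x then (1 : ℝ) else 0) * gibbsW σ (EPV σ θ (n + m)) ρ := by
    apply Finset.sum_pos'
    · intro ρ hρ
      by_cases h : RcntB n m j B ρ = x
      · rw [if_pos h, one_mul]; exact le_of_lt (hgibbs ρ hρ)
      · rw [if_neg h, zero_mul]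
    · exact ⟨ρw, hρw, by rw [hRw, if_pos rfl, one_mul]; exact hgibbs ρw hρw⟩
  have hPos : 0 < condExpPi σ (EPV σ θ) n m (Finset.image B Finset.univ)
      (fun ρ => if RcntB n m j B ρ = x then (1 : ℝ) else 0) := by
    rw [condExpPi]
    exact div_pos hNumPos hDenPos
  refine ⟨?_, hPos⟩
  have hr0 : risingFac θ (n + m) ≠ 0 := risingFac_ne_zero hθ0 (by linarith) _
  have hwne : wW σ θ (Finset.image B Finset.univ) ≠ 0 := wpi_ne hσ0 hσ1 hθ hθ0
  have hNum : (∑ ρ ∈ extensions n m (Finset.image B Finset.univ),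
      (if RcntB n m j B ρ = x then (1 : ℝ) else 0) * gibbsW σ (EPV σ θ (n + m)) ρ) =
      (wW σ θ (Finset.image B Finset.univ) *
        ∑ v ∈ Finset.Icc (j - x) j, (-1 : ℝ) ^ (v - (j - x)) * (v.choose (j - x) : ℝ) *
          ∑ cc ∈ Finset.powersetCard v (Finset.univ : Finset (Fin j)),
            risingFac (θ + (n : ℝ) - (∑ i ∈ cc, ((B i).card : ℝ)) + σ * v) m) /
        risingFac θ (n + m) := by
    rw [Finset.sum_congr rfl (fun ρ _ => by rw [gibbsW_EPV, ← mul_div_assoc]),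
      ← Finset.sum_div, num_sum hπ hBinj hxj]
  have hDen : (∑ ρ ∈ extensions n m (Finset.image B Finset.univ),
      gibbsW σ (EPV σ θ (n + m)) ρ) =
      (wW σ θ (Finset.image B Finset.univ) * risingFac (θ + n) m) / risingFac θ (n + m) := by
    rw [Finset.sum_congr rfl (fun ρ _ => by rw [gibbsW_EPV]),
      ← Finset.sum_div, denom_sum hπ hBinj]
  rw [condExpPi, hNum, hDen, div_div_div_cancel_right₀ hr0, mul_div_mul_left _ _ hwne]
  have hsign : (∑ v ∈ Finset.Icc (j - x) j,
      (-1 : ℝ) ^ (v - (j - x)) * (v.choose (j - x) : ℝ) *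
        ∑ cc ∈ Finset.powersetCard v (Finset.univ : Finset (Fin j)),
          risingFac (θ + (n : ℝ) - (∑ i ∈ cc, ((B i).card : ℝ)) + σ * v) m) =
      (-1 : ℝ) ^ j * ∑ v ∈ Finset.Icc (j - x) j,
        (Nat.choose v (j - x) : ℝ) * (-1 : ℝ) ^ (v + x) *
          ∑ cc ∈ Finset.powersetCard v (Finset.univ : Finset (Fin j)),
            risingFac (θ + (n : ℝ) - (∑ i ∈ cc, ((B i).card : ℝ)) + σ * v) m := by
    rw [Finset.mul_sum]
    apply Finset.sum_congr rfl
    intro v hv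
    have hv' : j - x ≤ v := (Finset.mem_Icc.1 hv).1
    have hco : ((-1 : ℝ)) ^ (v - (j - x)) = (-1 : ℝ) ^ j * (-1 : ℝ) ^ (v + x) := by
      rw [← pow_add, show j + (v + x) = (v - (j - x)) + 2 * ((j - x) + x) from by omega,
        pow_add, pow_mul, neg_one_sq, one_pow, mul_one]
    rw [hco]
    ring
  rw [hsign]
  ring
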